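/- Let T be a tree that has at least one regular core. Then T has at least one main core. -/

import Mathlib

open SimpleGraph

variable {V : Type*} [Fintype V] [DecidableEq V]

/-- A vertex `τ` separates `u` and `w` if its distances to them differ. -/
def Separates (T : SimpleGraph V) (τ u w : V) : Prop :=
  T.dist τ u ≠ T.dist τ w

/-- There are at least two vertices of `L` separating `u` and `w`. -/
def HasTwoSeparators (T : SimpleGraph V) (L : Set V) (u w : V) : Prop :=
  ∃ τ₁ ∈ L, ∃ τ₂ ∈ L, τ₁ ≠ τ₂ ∧ Separates T τ₁ u w ∧ Separates T τ₂ u w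

/-- `L` is a landmark set (non-landmarks model, `k = 2`): every pair of distinct
vertices outside `L` is separated by at least two vertices of `L`. -/
def IsLandmarkSet (T : SimpleGraph V) (L : Set V) : Prop :=
  ∀ u w : V, u ≠ w → u ∉ L → w ∉ L → HasTwoSeparators T L u w

/-- A core is a vertex of degree at least 3. -/
def IsCore (T : SimpleGraph V) [DecidableRel T.Adj] (v : V) : Prop :=
  3 ≤ T.degree v

/-- The subtree of the neighbor `x` of `v`: in a tree, the connected component of `x`
obtained by removing `v`, characterized via distances (`w` is in it iff the path from
`v` to `w` passes through `x`). -/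
def Branch (T : SimpleGraph V) (v x : V) : Set V :=
  {w | T.dist v w = T.dist x w + 1}

/-- The subtree of the neighbor `x` of `v` is a (standard) leg:
a path containing no cores. -/
def IsStandardLeg (T : SimpleGraph V) [DecidableRel T.Adj] (v x : V) : Prop :=
  T.Adj v x ∧ ∀ w ∈ Branch T v x, T.degree w ≤ 2

/-- A short leg consists of a single vertex. -/
def IsShortLeg (T : SimpleGraph V) [DecidableRel T.Adj] (v x : V) : Prop :=
  IsStandardLeg T v x ∧ Branch T v x = {x}

/-- A long leg is a standard leg that is not short. -/
def IsLongLeg (T : SimpleGraph V) [DecidableRel T.Adj] (v x : V) : Prop :=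
  IsStandardLeg T v x ∧ Branch T v x ≠ {x}

/-- A small core: degree exactly 3, with at least two standard legs, one of which is short. -/
def IsSmallCore (T : SimpleGraph V) [DecidableRel T.Adj] (v : V) : Prop :=
  T.degree v = 3 ∧ ∃ x y : V, x ≠ y ∧ IsShortLeg T v x ∧ IsStandardLeg T v y

/-- A regular core is a core that is not small. -/
def IsRegularCore (T : SimpleGraph V) [DecidableRel T.Adj] (v : V) : Prop :=
  IsCore T v ∧ ¬ IsSmallCore T v

/-- A modified leg of `v`: a subtree of a neighbor of `v` containing exactly one core,
which is a small core. -/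
def IsModifiedLeg (T : SimpleGraph V) [DecidableRel T.Adj] (v x : V) : Prop :=
  T.Adj v x ∧ ∃ u ∈ Branch T v x, IsSmallCore T u ∧
    ∀ w ∈ Branch T v x, IsCore T w → w = u

/-- A g-leg is a standard leg or a modified leg. -/
def IsGLeg (T : SimpleGraph V) [DecidableRel T.Adj] (v x : V) : Prop :=
  IsStandardLeg T v x ∨ IsModifiedLeg T v x

/-- A minor core: a regular core which either (i) has at most one g-leg, or
(ii) has degree at least 4, no modified legs, exactly two standard legs one of which
is short, and every other subtree of a neighbor contains a regular core. -/
def IsMinorCore (T : SimpleGraph V) [DecidableRel T.Adj] (v : V) : Prop :=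
  IsRegularCore T v ∧
  ((∀ x y : V, IsGLeg T v x → IsGLeg T v y → x = y) ∨
   (4 ≤ T.degree v ∧ (∀ x : V, ¬ IsModifiedLeg T v x) ∧
    (∃ x y : V, x ≠ y ∧ IsShortLeg T v x ∧ IsStandardLeg T v y ∧
      ∀ z : V, IsStandardLeg T v z → z = x ∨ z = y) ∧
    (∀ z : V, T.Adj v z → ¬ IsGLeg T v z → ∃ w ∈ Branch T v z, IsRegularCore T w)))

/-- A main core is a regular core that is not minor. -/
def IsMainCore (T : SimpleGraph V) [DecidableRel T.Adj] (v : V) : Prop :=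
  IsRegularCore T v ∧ ¬ IsMinorCore T v

/-- The vertices lying on g-legs of `v`. -/
def GLegVerts (T : SimpleGraph V) [DecidableRel T.Adj] (v : V) : Set V :=
  {w | ∃ x : V, IsGLeg T v x ∧ w ∈ Branch T v x}

/-- Type (s,0) solution on the leg of neighbor `x` of `v`: the empty set. -/
def SolS0 (T : SimpleGraph V) (v x : V) (S : Set V) : Prop :=
  S ∩ Branch T v x = ∅

/-- Type (s,1) solution: one vertex of the leg whose position is at least 2. -/
def SolS1 (T : SimpleGraph V) (v x : V) (S : Set V) : Prop :=
  ∃ w : V, S ∩ Branch T v x = {w} ∧ 2 ≤ T.dist v w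

/-- Type (s,2) solution: at least two vertices of the leg. -/
def SolS2 (T : SimpleGraph V) (v x : V) (S : Set V) : Prop :=
  ∃ w₁ ∈ S ∩ Branch T v x, ∃ w₂ ∈ S ∩ Branch T v x, w₁ ≠ w₂

/-- Type (s,3) solution: exactly the vertex with position 1 (that is, `x`). -/
def SolS3 (T : SimpleGraph V) (v x : V) (S : Set V) : Prop :=
  S ∩ Branch T v x = {x}

/-- For a modified leg `x` of `v`: `u` is its small core (at position `T.dist v u`),
and `a`, `b` are the two vertices at position `T.dist v u + 1`, where `b` is the
vertex of a short leg of `u` (the vertex `ℓ^b`) and `a` is the other one (`ℓ^a`). -/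
def MLegPair (T : SimpleGraph V) [DecidableRel T.Adj] (v x u a b : V) : Prop :=
  u ∈ Branch T v x ∧ IsSmallCore T u ∧ a ≠ b ∧
  a ∈ Branch T v x ∧ b ∈ Branch T v x ∧
  T.dist v a = T.dist v u + 1 ∧ T.dist v b = T.dist v u + 1 ∧
  IsShortLeg T u b

/-- Type (m,1) solution on the modified leg `x` of `v`: either `{ℓ^a}` or `{ℓ^b}`. -/
def SolM1 (T : SimpleGraph V) [DecidableRel T.Adj] (v x : V) (S : Set V) : Prop :=
  ∃ u a b : V, MLegPair T v x u a b ∧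
    (S ∩ Branch T v x = {a} ∨ S ∩ Branch T v x = {b})

/-- Type (m,2) solution: contains neither `ℓ^a` nor `ℓ^b`, contains at least two
vertices of positions at least `i + 2`, and no vertex of position `i + 1`. -/
def SolM2 (T : SimpleGraph V) [DecidableRel T.Adj] (v x : V) (S : Set V) : Prop :=
  ∃ u a b : V, MLegPair T v x u a b ∧ a ∉ S ∧ b ∉ S ∧
    (∃ w₁ ∈ S ∩ Branch T v x, ∃ w₂ ∈ S ∩ Branch T v x, w₁ ≠ w₂ ∧
      T.dist v u + 2 ≤ T.dist v w₁ ∧ T.dist v u + 2 ≤ T.dist v w₂) ∧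
    ∀ w ∈ S ∩ Branch T v x, T.dist v w ≠ T.dist v u + 1

/-- Type (m,3) solution: at least two vertices, one of which is `ℓ^a` or `ℓ^b`. -/
def SolM3 (T : SimpleGraph V) [DecidableRel T.Adj] (v x : V) (S : Set V) : Prop :=
  ∃ u a b : V, MLegPair T v x u a b ∧
    (∃ w₁ ∈ S ∩ Branch T v x, ∃ w₂ ∈ S ∩ Branch T v x, w₁ ≠ w₂) ∧
    (a ∈ S ∨ b ∈ S)

/-- `S` is a local set for the core `v`. -/
def IsLocalSet (T : SimpleGraph V) [DecidableRel T.Adj] (v : V) (S : Set V) : Prop :=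
  S ⊆ GLegVerts T v ∧
  -- (1) at most one standard leg has a type (s,0) solution, and every standard leg
  -- has a solution of one of the types (s,0), (s,1), (s,2), (s,3)
  (∀ x y : V, IsStandardLeg T v x → IsStandardLeg T v y → x ≠ y →
    SolS0 T v x S → SolS0 T v y S → False) ∧
  (∀ x : V, IsStandardLeg T v x →
    SolS0 T v x S ∨ SolS1 T v x S ∨ SolS2 T v x S ∨ SolS3 T v x S) ∧
  -- (2) every modified leg has a solution of type (m,1), (m,2) or (m,3)
  (∀ x : V, IsModifiedLeg T v x →
    SolM1 T v x S ∨ SolM2 T v x S ∨ SolM3 T v x S) ∧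
  -- (3) if some standard leg has a type (s,0) solution, no modified leg has type (m,1)
  ((∃ x : V, IsStandardLeg T v x ∧ SolS0 T v x S) →
    ∀ y : V, IsModifiedLeg T v y → ¬ SolM1 T v y S) ∧
  -- (4) if some long leg has a type (s,0) solution, every other long leg has type (s,2)
  (∀ x : V, IsLongLeg T v x → SolS0 T v x S →
    ∀ y : V, IsLongLeg T v y → y ≠ x → SolS2 T v y S) ∧
  -- (5) if some short leg has a type (s,0) solution, every long leg has type (s,2) or (s,3)
  ((∃ x : V, IsShortLeg T v x ∧ SolS0 T v x S) →
    ∀ y : V, IsLongLeg T v y → SolS2 T v y S ∨ SolS3 T v y S)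

/-- A local set is thrifty if its solutions of types (s,2), (m,2) and (m,3)
consist of exactly two vertices each. -/
def IsThrifty (T : SimpleGraph V) [DecidableRel T.Adj] (v : V) (S : Set V) : Prop :=
  (∀ x : V, IsStandardLeg T v x → SolS2 T v x S → (S ∩ Branch T v x).ncard = 2) ∧
  (∀ x : V, IsModifiedLeg T v x → (SolM2 T v x S ∨ SolM3 T v x S) →
    (S ∩ Branch T v x).ncard = 2)

set_option linter.unusedSectionVars false

section Lemmas

variable {T : SimpleGraph V} [DecidableRel T.Adj]

lemma path_length_eq_dist (hT : T.IsTree) {a b : V} (p : T.Walk a b) (hp : p.IsPath) :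
    p.length = T.dist a b := by
  obtain ⟨q, hq, hql⟩ := hT.isConnected.exists_path_of_dist a b
  rw [(hT.existsUnique_path a b).unique hp hq, hql]

lemma dist_add_of_mem_support (hT : T.IsTree) {a b x : V} {p : T.Walk a b} (hp : p.IsPath)
    (hx : x ∈ p.support) : T.dist a x + T.dist x b = T.dist a b := by
  have h1 : T.dist a x ≤ (p.takeUntil x hx).length := SimpleGraph.dist_le _
  have h2 : T.dist x b ≤ (p.dropUntil x hx).length := SimpleGraph.dist_le _
  have h3 : (p.takeUntil x hx).length + (p.dropUntil x hx).length = p.length := by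
    rw [← SimpleGraph.Walk.length_append, p.take_spec hx]
  have h4 := path_length_eq_dist hT p hp
  have h5 := hT.isConnected.dist_triangle (u := a) (v := x) (w := b)
  omega

lemma adj_dist_cases (hT : T.IsTree) {v x : V} (hadj : T.Adj v x) (w : V) :
    T.dist w v = T.dist w x + 1 ∨ T.dist w x = T.dist w v + 1 := by
  obtain ⟨p, hp, hpl⟩ := hT.isConnected.exists_path_of_dist w v
  have hxv : x ≠ v := (T.ne_of_adj hadj.symm)
  have hdxv : T.dist x v = 1 := SimpleGraph.dist_eq_one_iff_adj.mpr hadj.symm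
  have hdvx : T.dist v x = 1 := SimpleGraph.dist_eq_one_iff_adj.mpr hadj
  by_cases hx : x ∈ p.support
  · left
    have := dist_add_of_mem_support hT hp hx
    omega
  · obtain ⟨q, hq, hql⟩ := hT.isConnected.exists_path_of_dist w x
    by_cases hv : v ∈ q.support
    · right
      have := dist_add_of_mem_support hT hq hv
      omega
    · exfalso
      have hrev : q.reverse.IsPath := hq.reverse
      have hns : v ∉ q.reverse.support := by
        rw [SimpleGraph.Walk.support_reverse]; simpa using hv
      have hc : (SimpleGraph.Walk.cons hadj q.reverse).IsPath := hrev.cons hns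
      have hc2 : (SimpleGraph.Walk.cons hadj q.reverse).reverse.IsPath := hc.reverse
      have := (hT.existsUnique_path w v).unique hc2 hp
      apply hx
      have hxs : x ∈ (SimpleGraph.Walk.cons hadj q.reverse).reverse.support := by
        rw [SimpleGraph.Walk.support_reverse, List.mem_reverse,
          SimpleGraph.Walk.support_cons]
        refine List.mem_cons_of_mem _ ?_
        rw [SimpleGraph.Walk.support_reverse, List.mem_reverse]
        exact q.end_mem_support
      rwa [this] at hxs

lemma adj_dist_ne (hT : T.IsTree) {v x : V} (hadj : T.Adj v x) (w : V) :
    T.dist w v ≠ T.dist w x := by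
  rcases adj_dist_cases hT hadj w with h | h <;> omega

lemma self_not_mem_branch {v x : V} : v ∉ Branch T v x := by
  intro h
  have : T.dist v v = 0 := SimpleGraph.dist_self
  have h2 : T.dist v v = T.dist x v + 1 := h
  omega

lemma mem_branch_self {v x : V} (hadj : T.Adj v x) : x ∈ Branch T v x := by
  have h1 : T.dist v x = 1 := SimpleGraph.dist_eq_one_iff_adj.mpr hadj
  have h2 : T.dist x x = 0 := SimpleGraph.dist_self
  show T.dist v x = T.dist x x + 1
  omega

lemma branch_dist_pos {v x w : V} (hw : w ∈ Branch T v x) : 1 ≤ T.dist v w := by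
  have h : T.dist v w = T.dist x w + 1 := hw
  omega

lemma branch_ne {v x w : V} (hw : w ∈ Branch T v x) : w ≠ v := by
  intro h
  subst h
  exact absurd hw self_not_mem_branch

lemma exists_branch (hT : T.IsTree) {v w : V} (hvw : w ≠ v) :
    ∃ x, T.Adj v x ∧ w ∈ Branch T v x := by
  obtain ⟨p, hp, hpl⟩ := hT.isConnected.exists_path_of_dist v w
  cases p with
  | nil => exact absurd rfl hvw.symm
  | @cons _ x _ h tail =>
    refine ⟨x, h, ?_⟩
    have htail : tail.IsPath := (SimpleGraph.Walk.cons_isPath_iff h tail).mp hp |>.1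
    have hlen : tail.length + 1 = T.dist v w := by
      simpa [SimpleGraph.Walk.length_cons] using hpl
    have h1 : T.dist x w ≤ tail.length := SimpleGraph.dist_le _
    have h2 : T.dist v w ≤ T.dist v x + T.dist x w := hT.isConnected.dist_triangle
    have h3 : T.dist v x = 1 := SimpleGraph.dist_eq_one_iff_adj.mpr h
    show T.dist v w = T.dist x w + 1
    omega

lemma branch_unique (hT : T.IsTree) {v x y w : V} (h1 : T.Adj v x) (h2 : T.Adj v y)
    (hwx : w ∈ Branch T v x) (hwy : w ∈ Branch T v y) : x = y := by
  have hdx : T.dist v w = T.dist x w + 1 := hwx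
  have hdy : T.dist v w = T.dist y w + 1 := hwy
  obtain ⟨px, hpx, hpxl⟩ := hT.isConnected.exists_path_of_dist x w
  obtain ⟨py, hpy, hpyl⟩ := hT.isConnected.exists_path_of_dist y w
  have hvnx : v ∉ px.support := by
    intro hv
    have := dist_add_of_mem_support hT hpx hv
    have : T.dist x v = 1 := SimpleGraph.dist_eq_one_iff_adj.mpr h1.symm
    omega
  have hvny : v ∉ py.support := by
    intro hv
    have := dist_add_of_mem_support hT hpy hv
    have : T.dist y v = 1 := SimpleGraph.dist_eq_one_iff_adj.mpr h2.symm
    omega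
  have hP1 : (SimpleGraph.Walk.cons h1 px).IsPath := hpx.cons hvnx
  have hP2 : (SimpleGraph.Walk.cons h2 py).IsPath := hpy.cons hvny
  have heq := (hT.existsUnique_path v w).unique hP1 hP2
  have := congrArg (fun q => SimpleGraph.Walk.getVert q 1) heq
  simpa [SimpleGraph.Walk.getVert_cons_succ, SimpleGraph.Walk.getVert_zero] using this

lemma branch_crossing (hT : T.IsTree) {v x a b : V} (hvx : T.Adj v x) (hab : T.Adj a b)
    (ha : a ∈ Branch T v x) (hb : b ∉ Branch T v x) : b = v := by
  by_contra hbv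
  have hda : T.dist v a = T.dist x a + 1 := ha
  have e1 : T.dist b v = T.dist v b := SimpleGraph.dist_comm
  have e2 : T.dist b x = T.dist x b := SimpleGraph.dist_comm
  have hdb : T.dist x b = T.dist v b + 1 := by
    rcases adj_dist_cases hT hvx b with h | h
    · exact absurd (show T.dist v b = T.dist x b + 1 by omega) hb
    · omega
  have hcv := adj_dist_cases hT hab v
  have hcx := adj_dist_cases hT hab x
  have hvb : T.dist v b = T.dist x a := by
    rcases hcv with h | h <;> rcases hcx with h2 | h2 <;> omega
  have hxb : T.dist x b = T.dist x a + 1 := by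
    rcases hcv with h | h <;> rcases hcx with h2 | h2 <;> omega
  have hdab : T.dist a b = 1 := SimpleGraph.dist_eq_one_iff_adj.mpr hab
  -- construct the two presentations of the unique path from v to a
  obtain ⟨pa, hpa, hpal⟩ := hT.isConnected.exists_path_of_dist x a
  have hvpa : v ∉ pa.support := by
    intro hv
    have := dist_add_of_mem_support hT hpa hv
    have : T.dist x v = 1 := SimpleGraph.dist_eq_one_iff_adj.mpr hvx.symm
    omega
  have hP1 : (SimpleGraph.Walk.cons hvx pa).IsPath := hpa.cons hvpa
  obtain ⟨pb, hpb, hpbl⟩ := hT.isConnected.exists_path_of_dist v b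
  have hapb : a ∉ pb.support := by
    intro hv
    have := dist_add_of_mem_support hT hpb hv
    have h2 : T.dist a b = 1 := hdab
    omega
  have hapb' : a ∉ pb.reverse.support := by
    rw [SimpleGraph.Walk.support_reverse]; simpa using hapb
  have hP2' : (SimpleGraph.Walk.cons hab pb.reverse).IsPath := hpb.reverse.cons hapb'
  have hP2 : (SimpleGraph.Walk.cons hab pb.reverse).reverse.IsPath := hP2'.reverse
  have heq := (hT.existsUnique_path v a).unique hP2 hP1
  have hbsup : b ∈ (SimpleGraph.Walk.cons hab pb.reverse).reverse.support := by
    rw [SimpleGraph.Walk.support_reverse, List.mem_reverse, SimpleGraph.Walk.support_cons]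
    refine List.mem_cons_of_mem _ ?_
    rw [SimpleGraph.Walk.support_reverse, List.mem_reverse]
    exact pb.end_mem_support
  rw [heq, SimpleGraph.Walk.support_cons] at hbsup
  rcases List.mem_cons.mp hbsup with hcs | hcs
  · exact hbv hcs
  · have := dist_add_of_mem_support hT hpa hcs
    have hba : T.dist b a = T.dist a b := SimpleGraph.dist_comm
    omega

lemma walk_mem_support (hT : T.IsTree) {v x w : V} (hvx : T.Adj v x)
    (hw : w ∈ Branch T v x) :
    ∀ {z : V} (q : T.Walk z w), z ∉ Branch T v x → v ∈ q.support := by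
  intro z q
  induction q with
  | nil => intro hz; exact absurd hw hz
  | @cons u c _ h rest ih =>
    intro hu
    by_cases huv : u = v
    · exact huv ▸ (SimpleGraph.Walk.cons h rest).start_mem_support
    · by_cases hc : c ∈ Branch T v x
      · exact absurd (branch_crossing hT hvx h.symm hc hu) huv
      · rw [SimpleGraph.Walk.support_cons]
        exact List.mem_cons_of_mem _ (ih hw hc)

lemma dist_add_of_not_mem (hT : T.IsTree) {v x w z : V} (hvx : T.Adj v x)
    (hw : w ∈ Branch T v x) (hz : z ∉ Branch T v x) :
    T.dist z w = T.dist z v + T.dist v w := by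
  obtain ⟨p, hp, hpl⟩ := hT.isConnected.exists_path_of_dist z w
  have hv := walk_mem_support hT hvx hw p hz
  exact (dist_add_of_mem_support hT hp hv).symm

lemma branch_subset (hT : T.IsTree) {a b c z : V} (hab : T.Adj a b) (hcz : T.Adj c z)
    (hc : c ∈ Branch T a b) (haz : a ∉ Branch T c z) :
    Branch T c z ⊆ Branch T a b := by
  have hbz : b ∉ Branch T c z := by
    by_cases hcb : c = b
    · rw [← hcb]; exact self_not_mem_branch
    · intro hbmem
      have h1 := dist_add_of_not_mem hT hcz hbmem haz
      have h2 : T.dist a b = 1 := SimpleGraph.dist_eq_one_iff_adj.mpr hab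
      have h3 : 1 ≤ T.dist a c := hT.isConnected.pos_dist_of_ne (fun h => (h ▸ hc : a ∈ Branch T a b) |> (fun hh => absurd hh self_not_mem_branch))
      have h4 : 1 ≤ T.dist c b := hT.isConnected.pos_dist_of_ne hcb
      omega
  intro w hwz
  have h1 := dist_add_of_not_mem hT hcz hwz haz
  have h2 := dist_add_of_not_mem hT hcz hwz hbz
  have h3 : T.dist a c = T.dist b c + 1 := hc
  show T.dist a w = T.dist b w + 1
  omega

lemma modified_of_no_regular (hT : T.IsTree) :
    ∀ (n : ℕ) (a b : V), (Branch T a b).ncard ≤ n → T.Adj a b →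
    (∃ r, IsCore T r ∧ r ∉ Branch T a b) →
    (∃ c ∈ Branch T a b, IsCore T c) →
    (∀ w ∈ Branch T a b, ¬ IsRegularCore T w) →
    IsModifiedLeg T a b := by
  intro n
  induction n with
  | zero =>
    intro a b hcard hab _ _ _
    have hbB : b ∈ Branch T a b := mem_branch_self hab
    have : 0 < (Branch T a b).ncard := (Set.ncard_pos (Set.toFinite _)).mpr ⟨b, hbB⟩
    omega
  | succ n ih =>
    intro a b hcard hab hout hex hnoreg
    obtain ⟨r, hrcore, hrB⟩ := hout
    have hbB : b ∈ Branch T a b := mem_branch_self hab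
    have hzne : ∀ z, T.Adj b z → z ≠ a → a ∉ Branch T b z := by
      intro z hbz hza hmem
      have h1 : T.dist b a = T.dist z a + 1 := hmem
      have h2 : T.dist b a = 1 := SimpleGraph.dist_eq_one_iff_adj.mpr hab.symm
      have h3 : T.dist z a = 0 := by omega
      exact hza (hT.isConnected.dist_eq_zero_iff.mp h3)
    have hnotback : ∀ w, w ∈ Branch T a b → w ∉ Branch T b a := by
      intro w hw hw2
      have h1 : T.dist a w = T.dist b w + 1 := hw
      have h2 : T.dist b w = T.dist a w + 1 := hw2
      omega
    by_cases hbcore : IsCore T b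
    · have hbsmall : IsSmallCore T b := by
        by_contra hns
        exact hnoreg b hbB ⟨hbcore, hns⟩
      obtain ⟨hdeg3, x', y', hxy', hshort, hstd⟩ := hbsmall
      have hrba : r ∈ Branch T b a := by
        have hrb : r ≠ b := fun h => hrB (h ▸ hbB)
        obtain ⟨z, hbz, hrz⟩ := exists_branch hT hrb
        by_cases hza : z = a
        · exact hza ▸ hrz
        · exact absurd (branch_subset hT hab hbz hbB (hzne z hbz hza) hrz) hrB
      have hrdeg : 3 ≤ T.degree r := hrcore
      have hx'a : x' ≠ a := by
        intro h; subst h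
        have := hshort.1.2 r hrba
        omega
      have hy'a : y' ≠ a := by
        intro h; subst h
        have := hstd.2 r hrba
        omega
      have hnbr : ({a, x', y'} : Finset V) = T.neighborFinset b := by
        apply Finset.eq_of_subset_of_card_le
        · intro t ht
          simp only [Finset.mem_insert, Finset.mem_singleton] at ht
          rcases ht with h | h | h
          · subst h; exact (T.mem_neighborFinset _ _).mpr hab.symm
          · subst h; exact (T.mem_neighborFinset _ _).mpr hshort.1.1
          · subst h; exact (T.mem_neighborFinset _ _).mpr hstd.1
        · have hdb : (T.neighborFinset b).card = 3 := by
            rw [T.card_neighborFinset_eq_degree b]; exact hdeg3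
          have hc3 : ({a, x', y'} : Finset V).card = 3 := by
            rw [Finset.card_insert_of_notMem (by
                simp only [Finset.mem_insert, Finset.mem_singleton]
                exact not_or.mpr ⟨Ne.symm hx'a, Ne.symm hy'a⟩),
              Finset.card_insert_of_notMem (by
                simp only [Finset.mem_singleton]; exact hxy'),
              Finset.card_singleton]
          omega
      refine ⟨hab, b, hbB, ⟨hdeg3, x', y', hxy', hshort, hstd⟩, ?_⟩
      intro w hwB hwcore
      by_contra hwb
      obtain ⟨z, hbz, hwz⟩ := exists_branch hT hwb
      have hz : z ∈ ({a, x', y'} : Finset V) := hnbr ▸ (T.mem_neighborFinset _ _).mpr hbz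
      have hwdeg : 3 ≤ T.degree w := hwcore
      simp only [Finset.mem_insert, Finset.mem_singleton] at hz
      rcases hz with h | h | h
      · subst h; exact hnotback w hwB hwz
      · subst h; have := hshort.1.2 w hwz; omega
      · subst h; have := hstd.2 w hwz; omega
    · obtain ⟨c, hcB, hccore⟩ := hex
      have hcb : c ≠ b := fun h => hbcore (h ▸ hccore)
      obtain ⟨z, hbz, hcz⟩ := exists_branch hT hcb
      have hza : z ≠ a := by
        intro h; subst h; exact hnotback c hcB hcz
      have haz := hzne z hbz hza
      have hsub : Branch T b z ⊆ Branch T a b := branch_subset hT hab hbz hbB haz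
      have hlt : (Branch T b z).ncard ≤ n := by
        have hssub : Branch T b z ⊂ Branch T a b :=
          ⟨hsub, fun h => absurd (h hbB) self_not_mem_branch⟩
        have := Set.ncard_lt_ncard hssub (Set.toFinite _)
        omega
      have hml := ih b z hlt hbz ⟨r, hrcore, fun h => hrB (hsub h)⟩ ⟨c, hcz, hccore⟩
        (fun w hw => hnoreg w (hsub hw))
      obtain ⟨_, u, huB, husmall, huniq⟩ := hml
      refine ⟨hab, u, hsub huB, husmall, ?_⟩
      intro w hwB hwcore
      have hwb : w ≠ b := fun h => hbcore (h ▸ hwcore)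
      obtain ⟨z', hbz', hwz'⟩ := exists_branch hT hwb
      have hz'a : z' ≠ a := fun h => hnotback w hwB (h ▸ hwz')
      have hdegb : T.degree b ≤ 2 := by
        by_contra hd
        exact hbcore (by omega : 3 ≤ T.degree b)
      have hz'z : z' = z := by
        by_contra hne
        have hsubn : ({a, z, z'} : Finset V) ⊆ T.neighborFinset b := by
          intro t ht
          simp only [Finset.mem_insert, Finset.mem_singleton] at ht
          rcases ht with h | h | h
          · subst h; exact (T.mem_neighborFinset _ _).mpr hab.symm
          · subst h; exact (T.mem_neighborFinset _ _).mpr hbz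
          · subst h; exact (T.mem_neighborFinset _ _).mpr hbz'
        have hcard : ({a, z, z'} : Finset V).card = 3 := by
          rw [Finset.card_insert_of_notMem (by simp [Ne.symm hza, Ne.symm hz'a]),
            Finset.card_insert_of_notMem (by simp only [Finset.mem_singleton]; exact fun h => hne h.symm),
            Finset.card_singleton]
        have := Finset.card_le_card hsubn
        rw [T.card_neighborFinset_eq_degree b] at this
        omega
      exact huniq w (hz'z ▸ hwz') hwcore
end Lemmas

/-- a tree with a regular core has a main core. -/
theorem regular_core_implies_main_core
    (T : SimpleGraph V) [DecidableRel T.Adj] (hT : T.IsTree)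
    (h : ∃ v : V, IsRegularCore T v) :
    ∃ v : V, IsMainCore T v := by
  classical
  obtain ⟨v₀, hv₀⟩ := h
  obtain ⟨v, hvreg, hmax⟩ := Set.Finite.exists_maximalFor (T.dist v₀)
    {v | IsRegularCore T v} (Set.toFinite _) ⟨v₀, hv₀⟩
  refine ⟨v, hvreg, ?_⟩
  rintro ⟨-, hcase⟩
  have key : ∀ b : V, T.Adj v b → (∃ w ∈ Branch T v b, IsRegularCore T w) →
      v₀ ∉ Branch T v b → False := by
    rintro b hb ⟨w, hwB, hwreg⟩ hnv₀
    have hd := dist_add_of_not_mem hT hb hwB hnv₀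
    have h1 : 1 ≤ T.dist v w := branch_dist_pos hwB
    have hle : T.dist v₀ v ≤ T.dist v₀ w := by omega
    have := hmax (j := w) hwreg hle
    omega
  have key2 : ∀ b₁ b₂ : V, b₁ ≠ b₂ → T.Adj v b₁ → T.Adj v b₂ →
      (∃ w ∈ Branch T v b₁, IsRegularCore T w) →
      (∃ w ∈ Branch T v b₂, IsRegularCore T w) → False := by
    intro b₁ b₂ hne h1 h2 e1 e2
    by_cases hv₀1 : v₀ ∈ Branch T v b₁
    · exact key b₂ h2 e2 (fun hv₀2 => hne (branch_unique hT h1 h2 hv₀1 hv₀2))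
    · exact key b₁ h1 e1 hv₀1
  have hreg_of_not_gleg : ∀ b : V, T.Adj v b → ¬ IsGLeg T v b →
      ∃ w ∈ Branch T v b, IsRegularCore T w := by
    intro b hb hng
    by_contra hno
    push_neg at hno
    apply hng
    right
    refine modified_of_no_regular hT (Branch T v b).ncard v b le_rfl hb
      ⟨v, hvreg.1, self_not_mem_branch⟩ ?_ (fun w hw hr => hno w hw hr)
    by_contra hnc
    push_neg at hnc
    apply hng
    left
    refine ⟨hb, fun w hw => ?_⟩
    have h3 : ¬ 3 ≤ T.degree w := hnc w hw
    omega
  have hdeg : 3 ≤ T.degree v := hvreg.1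
  have hN : (T.neighborFinset v).card = T.degree v := T.card_neighborFinset_eq_degree v
  have hsplit := Finset.card_filter_add_card_filter_not
    (s := T.neighborFinset v) (p := fun z => IsGLeg T v z)
  have finish : 1 < ((T.neighborFinset v).filter (fun z => ¬ IsGLeg T v z)).card → False := by
    intro h2
    obtain ⟨b₁, hb₁, b₂, hb₂, hne⟩ := Finset.one_lt_card.mp h2
    rw [Finset.mem_filter] at hb₁ hb₂
    have ha₁ := (T.mem_neighborFinset _ _).mp hb₁.1
    have ha₂ := (T.mem_neighborFinset _ _).mp hb₂.1
    exact key2 b₁ b₂ hne ha₁ ha₂ (hreg_of_not_gleg b₁ ha₁ hb₁.2) (hreg_of_not_gleg b₂ ha₂ hb₂.2)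
  rcases hcase with hone | ⟨hdeg4, hnomod, ⟨x, y, hxy, hx, hy, hall⟩, hother⟩
  · apply finish
    have hP1 : ((T.neighborFinset v).filter (fun z => IsGLeg T v z)).card ≤ 1 := by
      refine Finset.card_le_one.mpr ?_
      intro a ha b hbm
      rw [Finset.mem_filter] at ha hbm
      exact hone a b ha.2 hbm.2
    omega
  · apply finish
    have hP2 : ((T.neighborFinset v).filter (fun z => IsGLeg T v z)).card ≤ 2 := by
      have hsub2 : ((T.neighborFinset v).filter (fun z => IsGLeg T v z)) ⊆ {x, y} := by
        intro t ht
        rw [Finset.mem_filter] at ht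
        rcases ht.2 with hstdl | hmodl
        · rcases hall t hstdl with h | h <;> simp [h]
        · exact absurd hmodl (hnomod t)
      refine le_trans (Finset.card_le_card hsub2) ?_
      exact le_trans (Finset.card_insert_le _ _) (by simp)
    omega
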